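/- Let e ∈ ℝ^n with ∑_i e_i = 0, and run the Metropolis–Hastings consensus g(t+1) = S g(t), g(0) = e, on a connected graph, together with h_{ij}(t+1) = h_{ij}(t) + a_{ij}(g_j(t) - g_i(t)), h_{ij}(0) = 0, where a_{ij} = 1/(1+max{deg i, deg j}). Then the limits h_{ij,ss} = lim_{t→∞} h_{ij}(t) exist and satisfy ∑_{j∈N_i} h_{ij,ss} = -e_i for every i. -/

import Mathlib

open Finset Matrix Filter

/-- Eigenvalue bound for a symmetric substochastic-type matrix supported on a
connected graph with positive diagonal. -/
lemma eig_bound_aux {n : ℕ} {G : SimpleGraph (Fin n)} [DecidableRel G.Adj]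
    (hconn : G.Connected) {S : Matrix (Fin n) (Fin n) ℝ}
    (hnn : ∀ i j, 0 ≤ S i j) (hdiag : ∀ i, 0 < S i i)
    (hrow : ∀ i, ∑ j, S i j = 1)
    (hadj : ∀ i j, G.Adj i j → 0 < S i j)
    {v : Fin n → ℝ} {lam : ℝ} (hv : S *ᵥ v = lam • v) :
    |lam| < 1 ∨ ∀ i j, v i = v j := by
  classical
  have hne : Nonempty (Fin n) := hconn.nonempty
  obtain ⟨i₀, -, hi₀⟩ := Finset.exists_max_image Finset.univ (fun j => |v j|)
    ⟨Classical.arbitrary (Fin n), Finset.mem_univ _⟩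
  set s : ℝ := if 0 ≤ v i₀ then 1 else -1 with hs
  have hs0 : s ≠ 0 := by
    rcases le_or_gt 0 (v i₀) with h' | h'
    · simp [hs, h']
    · simp [hs, not_le.mpr h']
  set w : Fin n → ℝ := s • v with hwdef
  have hw : S *ᵥ w = lam • w := by
    rw [hwdef, Matrix.mulVec_smul, hv, smul_comm]
  set M : ℝ := w i₀ with hMdef
  have hMabs : M = |v i₀| := by
    rcases le_or_gt 0 (v i₀) with h' | h'
    · simp [hMdef, hwdef, hs, h', abs_of_nonneg h']
    · simp [hMdef, hwdef, hs, not_le.mpr h', abs_of_neg h']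
  have habsw : ∀ j, |w j| = |v j| := by
    intro j
    rcases le_or_gt 0 (v i₀) with h' | h'
    · simp [hwdef, hs, h', abs_mul]
    · simp [hwdef, hs, not_le.mpr h', abs_mul]
  have hM : ∀ j, |w j| ≤ M := by
    intro j; rw [habsw, hMabs]; exact hi₀ j (Finset.mem_univ j)
  have hM0 : 0 ≤ M := le_trans (abs_nonneg _) (hM i₀)
  have hSw : ∀ i, ∑ j, S i j * w j = lam * w i := by
    intro i
    have := congrFun hw i
    simpa [Matrix.mulVec, dotProduct] using this
  by_cases hMz : M = 0
  · right
    intro i j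
    have hv0 : ∀ k, v k = 0 := by
      intro k
      have := hM k
      rw [habsw, hMz] at this
      exact abs_nonpos_iff.mp this
    rw [hv0 i, hv0 j]
  have hMpos : 0 < M := lt_of_le_of_ne hM0 (Ne.symm hMz)
  -- |lam| ≤ 1
  have hlam1 : |lam| ≤ 1 := by
    have h1 : |lam| * M ≤ M := by
      have hw0 : 0 ≤ w i₀ := by rw [← hMdef]; exact hM0
      calc |lam| * M = |lam * w i₀| := by
            rw [abs_mul, abs_of_nonneg hw0, ← hMdef]
      _ = |∑ j, S i₀ j * w j| := by rw [hSw]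
      _ ≤ ∑ j, |S i₀ j * w j| := Finset.abs_sum_le_sum_abs _ _
      _ = ∑ j, S i₀ j * |w j| := by
            refine Finset.sum_congr rfl fun j _ => ?_
            rw [abs_mul, abs_of_nonneg (hnn i₀ j)]
      _ ≤ ∑ j, S i₀ j * M :=
            Finset.sum_le_sum fun j _ => mul_le_mul_of_nonneg_left (hM j) (hnn i₀ j)
      _ = M := by rw [← Finset.sum_mul, hrow, one_mul]
    nlinarith
  rcases lt_or_eq_of_le hlam1 with hlt | heq
  · exact Or.inl hlt
  -- |lam| = 1 : lam = 1 or -1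
  have hcases : lam = 1 ∨ lam = -1 := by
    rcases (abs_eq (by norm_num : (0:ℝ) ≤ 1)).mp heq with h' | h'
    · exact Or.inl h'
    · exact Or.inr h'
  rcases hcases with h1 | hneg
  · -- lam = 1 : eigenvector constant
    right
    have hstep : ∀ i, w i = M → ∀ j, G.Adj i j → w j = M := by
      intro i hi j hij
      have h0 : ∑ k, S i k * (M - w k) = 0 := by
        have : ∑ k, S i k * (M - w k) = (∑ k, S i k) * M - ∑ k, S i k * w k := by
          rw [Finset.sum_mul, ← Finset.sum_sub_distrib]
          exact Finset.sum_congr rfl fun k _ => by ring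
        rw [this, hrow, hSw, h1, one_mul, one_mul, hi]
        ring
      have hterm : ∀ k ∈ Finset.univ, 0 ≤ S i k * (M - w k) := by
        intro k _
        exact mul_nonneg (hnn i k) (by linarith [hM k, neg_abs_le (w k), le_abs_self (w k)])
      have := (Finset.sum_eq_zero_iff_of_nonneg hterm).mp h0 j (Finset.mem_univ j)
      have hSij := hadj i j hij
      have hz : M - w j = 0 := (mul_eq_zero.mp this).resolve_left hSij.ne'
      linarith
    have hwalk : ∀ (x y : Fin n) (p : G.Walk x y), w x = M → w y = M := by
      intro x y p
      induction p with
      | nil => exact id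
      | cons hxy q ih => exact fun hx => ih (hstep _ hx _ hxy)
    have hall : ∀ j, w j = M := by
      intro j
      obtain ⟨p⟩ := hconn i₀ j
      exact hwalk _ _ p hMdef.symm
    intro i j
    have := hall i
    have := hall j
    have hij : w i = w j := by rw [hall i, hall j]
    rw [hwdef] at hij
    simpa using mul_left_cancel₀ hs0 (by simpa using hij)
  · -- lam = -1 : contradiction
    exfalso
    have hpos : 0 < ∑ j, S i₀ j * (w j + M) := by
      refine Finset.sum_pos' (fun j _ => mul_nonneg (hnn i₀ j)
        (by linarith [hM j, neg_abs_le (w j)])) ⟨i₀, Finset.mem_univ _, ?_⟩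
      exact mul_pos (hdiag i₀) (by rw [← hMdef]; linarith)
    have hzero : ∑ j, S i₀ j * (w j + M) = 0 := by
      have : ∑ j, S i₀ j * (w j + M) = (∑ j, S i₀ j * w j) + (∑ j, S i₀ j) * M := by
        rw [Finset.sum_mul, ← Finset.sum_add_distrib]
        exact Finset.sum_congr rfl fun k _ => by ring
      rw [this, hSw, hrow, hneg, ← hMdef]
      ring
    rw [hzero] at hpos
    exact lt_irrefl 0 hpos


theorem flow_limits_exist_and_balance (n : ℕ) (G : SimpleGraph (Fin n))
    [DecidableRel G.Adj] (hconn : G.Connected)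
    (S : Matrix (Fin n) (Fin n) ℝ)
    (hS : ∀ i j, S i j =
      if G.Adj i j then 1 / (1 + max (G.degree i) (G.degree j) : ℝ)
      else if i = j then
        1 - ∑ k ∈ G.neighborFinset i, 1 / (1 + max (G.degree i) (G.degree k) : ℝ)
      else 0)
    (e : Fin n → ℝ) (hsum : ∑ i, e i = 0)
    (g : ℕ → Fin n → ℝ) (h : ℕ → Fin n → Fin n → ℝ)
    (hg0 : g 0 = e)
    (hgrec : ∀ t, g (t + 1) = S *ᵥ g t)
    (hh0 : ∀ i j, h 0 i j = 0)
    (hhrec : ∀ t i j, h (t + 1) i j =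
      h t i j + (1 / (1 + max (G.degree i) (G.degree j) : ℝ)) * (g t j - g t i)) :
    ∃ hss : Fin n → Fin n → ℝ,
      (∀ i j, Tendsto (fun t : ℕ => h t i j) atTop (nhds (hss i j))) ∧
      ∀ i, ∑ j ∈ G.neighborFinset i, hss i j = -e i := by
  classical
  set a : Fin n → Fin n → ℝ :=
    fun i j => 1 / (1 + max (G.degree i) (G.degree j) : ℝ) with ha_def
  have ha_pos : ∀ i j, 0 < a i j := by
    intro i j
    simp only [ha_def]
    positivity
  have hSii : ∀ i, S i i = 1 - ∑ k ∈ G.neighborFinset i, a i k := by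
    intro i; rw [hS]; simp [ha_def]
  have hSadj : ∀ i j, G.Adj i j → S i j = a i j := by
    intro i j hij; rw [hS, if_pos hij]
  have hSzero : ∀ i j, i ≠ j → ¬ G.Adj i j → S i j = 0 := by
    intro i j h1 h2; rw [hS, if_neg h2, if_neg h1]
  have hdiag : ∀ i, 0 < S i i := by
    intro i
    rw [hSii]
    have hle : ∑ k ∈ G.neighborFinset i, a i k
        ≤ ∑ _k ∈ G.neighborFinset i, (1 / (1 + (G.degree i : ℝ))) := by
      refine Finset.sum_le_sum fun k _ => ?_
      apply div_le_div_of_nonneg_left one_pos.le (by positivity)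
      have : (G.degree i : ℝ) ≤ ((max (G.degree i) (G.degree k) : ℕ) : ℝ) :=
        Nat.cast_le.mpr (le_max_left _ _)
      linarith
    have hcard : ∑ _k ∈ G.neighborFinset i, (1 / (1 + (G.degree i : ℝ)))
        = (G.degree i : ℝ) / (1 + (G.degree i : ℝ)) := by
      rw [Finset.sum_const, G.card_neighborFinset_eq_degree, nsmul_eq_mul]
      field_simp
    have hlt : (G.degree i : ℝ) / (1 + (G.degree i : ℝ)) < 1 := by
      rw [div_lt_one (by positivity)]; linarith
    linarith [hle, hcard ▸ hle]
  have hnn : ∀ i j, 0 ≤ S i j := by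
    intro i j
    by_cases hij : G.Adj i j
    · rw [hSadj i j hij]; exact (ha_pos i j).le
    by_cases hieq : i = j
    · subst hieq; exact (hdiag i).le
    · rw [hSzero i j hieq hij]
  have hadj' : ∀ i j, G.Adj i j → 0 < S i j := by
    intro i j hij; rw [hSadj i j hij]; exact ha_pos i j
  have hrow : ∀ i, ∑ j, S i j = 1 := by
    intro i
    have hnotmem : i ∉ G.neighborFinset i := by simp
    have h1 : ∑ j, S i j = ∑ j ∈ insert i (G.neighborFinset i), S i j := by
      symm
      apply Finset.sum_subset (Finset.subset_univ _)
      intro j _ hj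
      have hne2 : i ≠ j := fun hh => hj (by simp [hh])
      have hne : ¬ G.Adj i j := fun hadj => hj (Finset.mem_insert_of_mem (by simpa using hadj))
      exact hSzero i j hne2 hne
    rw [h1, Finset.sum_insert hnotmem, hSii,
      Finset.sum_congr rfl (fun j hj => hSadj i j (by simpa using hj))]
    ring
  have hsym : ∀ i j, S i j = S j i := by
    intro i j
    by_cases hij : G.Adj i j
    · rw [hSadj i j hij, hSadj j i hij.symm, ha_def]
      simp [max_comm]
    by_cases hieq : i = j
    · subst hieq; rfl
    · rw [hSzero i j hieq hij, hSzero j i (Ne.symm hieq) (fun hh => hij hh.symm)]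
  have hherm : S.IsHermitian := by
    ext i j
    simp only [Matrix.conjTranspose_apply, star_trivial]
    exact hsym j i
  -- eigen decomposition
  set b := hherm.eigenvectorBasis with hb
  set μ := hherm.eigenvalues with hμ
  set eE : EuclideanSpace ℝ (Fin n) := (WithLp.equiv 2 (Fin n → ℝ)).symm e with heE
  set c : Fin n → ℝ := fun k => b.repr eE k with hc
  have hexpand : ∀ i, e i = ∑ k, c k * (b k) i := by
    intro i
    have h2 := congrArg (fun x : EuclideanSpace ℝ (Fin n) => x i) (b.sum_repr eE); beta_reduce at h2
    have h3 : eE i = e i := rfl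
    rw [← h3, ← h2]
    rw [WithLp.ofLp_sum, Finset.sum_apply]
    exact Finset.sum_congr rfl fun k _ => rfl
  have heig : ∀ (t : ℕ) k, (S ^ t) *ᵥ ⇑(b k) = (μ k) ^ t • ⇑(b k) := by
    intro t k
    induction t with
    | zero => simp
    | succ t ih =>
        rw [pow_succ', ← Matrix.mulVec_mulVec, ih, Matrix.mulVec_smul,
          hherm.mulVec_eigenvectorBasis, smul_smul, ← pow_succ]
  have hgpow : ∀ t, g t = (S ^ t) *ᵥ e := by
    intro t
    induction t with
    | zero => simp [hg0]
    | succ t ih => rw [hgrec, ih, Matrix.mulVec_mulVec, ← pow_succ']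
  have hgt : ∀ t i, g t i = ∑ k, c k * ((μ k) ^ t * (b k) i) := by
    intro t i
    rw [hgpow]
    have : ∀ j, e j = ∑ k, c k * (b k) j := hexpand
    calc ((S ^ t) *ᵥ e) i = ∑ j, (S ^ t) i j * e j := rfl
      _ = ∑ j, (S ^ t) i j * ∑ k, c k * (b k) j := by
            exact Finset.sum_congr rfl fun j _ => by rw [this j]
      _ = ∑ j, ∑ k, c k * ((S ^ t) i j * (b k) j) := by
            refine Finset.sum_congr rfl fun j _ => ?_
            rw [Finset.mul_sum]
            exact Finset.sum_congr rfl fun k _ => by ring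
      _ = ∑ k, ∑ j, c k * ((S ^ t) i j * (b k) j) := Finset.sum_comm
      _ = ∑ k, c k * (((S ^ t) *ᵥ ⇑(b k)) i) := by
            refine Finset.sum_congr rfl fun k _ => ?_
            rw [← Finset.mul_sum]; rfl
      _ = ∑ k, c k * ((μ k) ^ t * (b k) i) := by
            refine Finset.sum_congr rfl fun k _ => ?_
            rw [heig t k]; rfl
  -- each eigen-mode is summable in t
  have hmode : ∀ k i, Summable (fun t : ℕ => c k * ((μ k) ^ t * (b k) i)) := by
    intro k i
    have hv : S *ᵥ ⇑(b k) = μ k • ⇑(b k) := hherm.mulVec_eigenvectorBasis k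
    rcases eig_bound_aux hconn hnn hdiag hrow hadj' hv with hlt | hconst
    · have hs : Summable (fun t : ℕ => (μ k) ^ t) :=
        summable_geometric_of_norm_lt_one (by simpa [Real.norm_eq_abs] using hlt)
      simpa [mul_assoc, mul_comm, mul_left_comm] using ((hs.mul_left (c k)).mul_right ((b k) i))
    · -- eigenvector constant ⟹ coefficient zero
      have hne : Nonempty (Fin n) := hconn.nonempty
      obtain ⟨i₀⟩ := hne
      have hck : c k = 0 := by
        rw [hc]
        simp only
        rw [b.repr_apply_apply]
        rw [PiLp.inner_apply]
        have : ∀ j, (b k) j = (b k) i₀ := fun j => hconst j i₀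
        calc ∑ j, (inner ℝ ((b k) j) (eE j) : ℝ) = ∑ j, (b k) i₀ * e j := by
              refine Finset.sum_congr rfl fun j _ => ?_
              rw [RCLike.inner_apply, this j]
              simp [heE, mul_comm]
          _ = (b k) i₀ * ∑ j, e j := by rw [Finset.mul_sum]
          _ = 0 := by rw [hsum, mul_zero]
      simp only [hck, zero_mul]
      exact summable_zero
  have hsumm : ∀ i, Summable (fun t : ℕ => g t i) := by
    intro i
    have : Summable (fun t : ℕ => ∑ k, c k * ((μ k) ^ t * (b k) i)) :=
      summable_sum (fun k _ => hmode k i)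
    exact this.congr fun t => (hgt t i).symm
  -- h as partial sums
  have hht : ∀ t i j, h t i j = ∑ s ∈ Finset.range t, a i j * (g s j - g s i) := by
    intro t i j
    induction t with
    | zero => simp [hh0]
    | succ t ih => rw [hhrec, ih, Finset.sum_range_succ]
  set hss : Fin n → Fin n → ℝ := fun i j => ∑' s : ℕ, a i j * (g s j - g s i) with hssdef
  have hsummij : ∀ i j, Summable (fun s : ℕ => a i j * (g s j - g s i)) := by
    intro i j
    exact ((hsumm j).sub (hsumm i)).mul_left (a i j)
  have htends : ∀ i j, Tendsto (fun t : ℕ => h t i j) atTop (nhds (hss i j)) := by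
    intro i j
    have := (hsummij i j).hasSum.tendsto_sum_nat
    exact this.congr fun t => (hht t i j).symm
  refine ⟨hss, htends, ?_⟩
  -- balance equation
  have hinv : ∀ t i, ∑ j ∈ G.neighborFinset i, h t i j = g t i - e i := by
    intro t i
    induction t with
    | zero => simp [hh0, hg0]
    | succ t ih =>
        have hstep : g (t+1) i = g t i + ∑ j ∈ G.neighborFinset i, a i j * (g t j - g t i) := by
          rw [hgrec]
          have h1 : (S *ᵥ g t) i = ∑ j, S i j * g t j := rfl
          have hnotmem : i ∉ G.neighborFinset i := by simp
          have h2 : ∑ j, S i j * g t j = ∑ j ∈ insert i (G.neighborFinset i), S i j * g t j := by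
            symm
            apply Finset.sum_subset (Finset.subset_univ _)
            intro j _ hj
            have hne2 : i ≠ j := fun hh => hj (by simp [hh])
            have hne : ¬ G.Adj i j := fun hadj => hj (Finset.mem_insert_of_mem (by simpa using hadj))
            rw [hSzero i j hne2 hne, zero_mul]
          have h3 : ∑ j ∈ G.neighborFinset i, S i j * g t j
              = ∑ j ∈ G.neighborFinset i, a i j * g t j :=
            Finset.sum_congr rfl (fun j hj => by rw [hSadj i j (by simpa using hj)])
          rw [h1, h2, Finset.sum_insert hnotmem, h3, hSii]
          have hsplit : ∑ j ∈ G.neighborFinset i, a i j * (g t j - g t i)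
              = (∑ j ∈ G.neighborFinset i, a i j * g t j)
                - (∑ j ∈ G.neighborFinset i, a i j) * g t i := by
            rw [Finset.sum_mul, ← Finset.sum_sub_distrib]
            exact Finset.sum_congr rfl fun j _ => by ring
          rw [hsplit]
          ring
        calc ∑ j ∈ G.neighborFinset i, h (t+1) i j
            = ∑ j ∈ G.neighborFinset i, (h t i j + a i j * (g t j - g t i)) := by
              exact Finset.sum_congr rfl fun j _ => hhrec t i j
          _ = (∑ j ∈ G.neighborFinset i, h t i j)
              + ∑ j ∈ G.neighborFinset i, a i j * (g t j - g t i) := Finset.sum_add_distrib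
          _ = g (t+1) i - e i := by rw [ih, hstep]; ring
  intro i
  have hg0' : Tendsto (fun t => g t i) atTop (nhds 0) := (hsumm i).tendsto_atTop_zero
  have hlhs : Tendsto (fun t => ∑ j ∈ G.neighborFinset i, h t i j) atTop
      (nhds (∑ j ∈ G.neighborFinset i, hss i j)) :=
    tendsto_finset_sum _ fun j _ => htends i j
  have hrhs : Tendsto (fun t => ∑ j ∈ G.neighborFinset i, h t i j) atTop (nhds (0 - e i)) := by
    have : Tendsto (fun t => g t i - e i) atTop (nhds (0 - e i)) :=
      hg0'.sub tendsto_const_nhds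
    exact this.congr fun t => (hinv t i).symm
  have := tendsto_nhds_unique hlhs hrhs
  rw [this]; ring
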